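/- Let β > 0, I = [−β/2, β/2], and let ℙ be any probability measure on E^I (product σ-algebra) satisfying ∫ f₁(x(t₁))⋯fₙ(x(tₙ)) dℙ(x) = 𝒮_{f₁,…,fₙ}(t₁,…,tₙ) for all n ≥ 1, (t₁,…,tₙ) ∈ I^n_≤ and fᵢ ∈ C(E,ℂ). Suppose that for every f ∈ C(E,ℂ): 𝒮_{f, f̄}(−β/2, −β/2) + 𝒮_{f̄, f}(β/2, β/2) = 𝒮_{f, f̄}(−β/2, β/2) + 𝒮_{f̄, f}(−β/2, β/2), where f̄ denotes the complex conjugate function. Then x(−β/2) = x(β/2) for ℙ-almost every x ∈ E^I. -/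

import Mathlib

open MeasureTheory ComplexConjugate

lemma monotone_pair {x y : ℝ} (h : x ≤ y) : Monotone ![x, y] := by
  intro i j hij
  fin_cases i <;> fin_cases j <;> simp_all

/-- **periodicity.** Let `β > 0`, `I = [−β/2, β/2]`, and let `ℙ` be a
probability measure on `E^I` whose moments along nondecreasing tuples of times are given
by the moment family `𝒮`.  If for every continuous `f` one has
`𝒮_{f,f̄}(−β/2,−β/2) + 𝒮_{f̄,f}(β/2,β/2) = 𝒮_{f,f̄}(−β/2,β/2) + 𝒮_{f̄,f}(−β/2,β/2)`,
then the coordinates at times `−β/2` and `β/2` agree `ℙ`-almost surely. -/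
theorem stmt_4
    (E : Type) [TopologicalSpace E] [CompactSpace E] [T2Space E]
    [SecondCountableTopology E] [MeasurableSpace E] [BorelSpace E]
    (β : ℝ) (hβ : 0 < β)
    (I : Set ℝ) (hIdef : I = Set.Icc (-(β / 2)) (β / 2))
    (S : ∀ n : ℕ, (Fin n → C(E, ℂ)) → (Fin n → ℝ) → ℂ)
    (hScont : ∀ (n : ℕ) (f : Fin n → C(E, ℂ)),
      ContinuousOn (S n f) {t : Fin n → ℝ | (∀ i, t i ∈ I) ∧ Monotone t})
    (hSlin : ∀ (n : ℕ) (t : Fin n → ℝ), (∀ i, t i ∈ I) → Monotone t →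
      ∀ (f : Fin n → C(E, ℂ)) (i : Fin n) (c : ℂ) (g h : C(E, ℂ)),
        S n (Function.update f i (c • g + h)) t
          = c * S n (Function.update f i g) t + S n (Function.update f i h) t)
    (hSbdd : ∀ (n : ℕ) (t : Fin n → ℝ), (∀ i, t i ∈ I) → Monotone t →
      ∃ C > 0, ∀ f : Fin n → C(E, ℂ), ‖S n f t‖ ≤ C * ∏ i, ‖f i‖)
    (hScons : ∀ (n : ℕ) (t : Fin (n + 1) → ℝ), (∀ i, t i ∈ I) → Monotone t →
      ∀ (f : Fin (n + 1) → C(E, ℂ)) (i : Fin (n + 1)), f i = 1 →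
        S (n + 1) f t = S n (f ∘ i.succAbove) (t ∘ i.succAbove))
    (hSnorm : ∀ t : Fin 1 → ℝ, (∀ i, t i ∈ I) → S 1 (fun _ => 1) t = 1)
    (hSpos : ∀ (n : ℕ) (t : Fin n → ℝ), (∀ i, t i ∈ I) → Monotone t →
      ∀ f : Fin n → C(E, ℂ), (∀ i x, (f i x).im = 0 ∧ 0 ≤ (f i x).re) →
        0 ≤ (S n f t).re ∧ (S n f t).im = 0)
    (P : Measure (I → E)) (hP : IsProbabilityMeasure P)
    (hPmom : ∀ n : ℕ, 1 ≤ n → ∀ t : Fin n → ℝ, ∀ ht : ∀ i, t i ∈ I, Monotone t →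
      ∀ f : Fin n → C(E, ℂ),
        ∫ x, ∏ i, f i (x ⟨t i, ht i⟩) ∂P = S n f t)
    (hkey : ∀ f : C(E, ℂ),
      S 2 ![f, star f] ![-(β / 2), -(β / 2)] + S 2 ![star f, f] ![β / 2, β / 2]
        = S 2 ![f, star f] ![-(β / 2), β / 2] + S 2 ![star f, f] ![-(β / 2), β / 2]) :
    ∀ a b : I, (a : ℝ) = -(β / 2) → (b : ℝ) = β / 2 →
      ∀ᵐ x ∂P, x a = x b := by
  intro a b ha hb
  obtain ⟨av, hav⟩ := a
  obtain ⟨bv, hbv⟩ := b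
  simp only at ha hb
  subst ha hb
  have hmemA : -(β / 2) ∈ I := hav
  have hmemB : β / 2 ∈ I := hbv
  have hab : -(β / 2) ≤ β / 2 := by linarith
  set a : I := ⟨-(β / 2), hav⟩
  set b : I := ⟨β / 2, hbv⟩
  -- integrability of products of coordinates
  have hint : ∀ (g h : C(E, ℂ)) (u v : I),
      Integrable (fun x : I → E => g (x u) * h (x v)) P := by
    intro g h u v
    have hm : Measurable fun x : I → E => g (x u) * h (x v) :=
      ((g.continuous.measurable.comp (measurable_pi_apply u)).mul
        (h.continuous.measurable.comp (measurable_pi_apply v)))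
    refine ⟨hm.aestronglyMeasurable, ?_⟩
    refine HasFiniteIntegral.of_bounded (C := ‖g‖ * ‖h‖) ?_
    filter_upwards with x
    rw [norm_mul]
    exact mul_le_mul (g.norm_coe_le_norm _) (h.norm_coe_le_norm _) (norm_nonneg _)
      (norm_nonneg _)
  -- moments in terms of S
  have moment : ∀ (g h : C(E, ℂ)) (u v : ℝ) (hu : u ∈ I) (hv : v ∈ I), u ≤ v →
      ∫ x, g (x ⟨u, hu⟩) * h (x ⟨v, hv⟩) ∂P = S 2 ![g, h] ![u, v] := by
    intro g h u v hu hv huv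
    have ht : ∀ i : Fin 2, ![u, v] i ∈ I := by
      intro i; fin_cases i <;> simpa
    have := hPmom 2 (by norm_num) ![u, v] ht (monotone_pair huv) ![g, h]
    rw [← this]
    refine integral_congr_ae ?_
    filter_upwards with x
    simp [Fin.prod_univ_two]
  have key : ∀ f : C(E, ℂ), ∀ᵐ x ∂P, f (x a) = f (x b) := by
    intro f
    set F : (I → E) → ℂ := fun x => f (x a) - f (x b) with hF
    have hFmeas : Measurable F :=
      ((f.continuous.measurable.comp (measurable_pi_apply a)).sub
        (f.continuous.measurable.comp (measurable_pi_apply b)))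
    have hI1 : ∫ x, F x * conj (F x) ∂P
        = S 2 ![f, star f] ![-(β / 2), -(β / 2)] + S 2 ![star f, f] ![β / 2, β / 2]
          - (S 2 ![f, star f] ![-(β / 2), β / 2] + S 2 ![star f, f] ![-(β / 2), β / 2]) := by
      have hexp : ∀ x : I → E, F x * conj (F x)
          = f (x a) * (star f) (x a) + (star f) (x b) * f (x b)
            - (f (x a) * (star f) (x b) + (star f) (x a) * f (x b)) := by
        intro x
        simp only [hF, ContinuousMap.star_apply, map_sub, Complex.star_def]
        ring
      rw [integral_congr_ae (Filter.Eventually.of_forall hexp)]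
      have hAdd1 : Integrable (fun x : I → E =>
          f (x a) * (star f) (x a) + (star f) (x b) * f (x b)) P :=
        (hint f (star f) a a).add (hint (star f) f b b)
      have hAdd2 : Integrable (fun x : I → E =>
          f (x a) * (star f) (x b) + (star f) (x a) * f (x b)) P :=
        (hint f (star f) a b).add (hint (star f) f a b)
      rw [integral_sub hAdd1 hAdd2,
        integral_add (hint f (star f) a a) (hint (star f) f b b),
        integral_add (hint f (star f) a b) (hint (star f) f a b),
        moment f (star f) _ _ hav hav le_rfl,
        moment (star f) f _ _ hbv hbv le_rfl,
        moment f (star f) _ _ hav hbv hab,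
        moment (star f) f _ _ hav hbv hab]
    have hI0 : ∫ x, F x * conj (F x) ∂P = 0 := by
      rw [hI1, hkey f]; ring
    have hre : ((∫ x, Complex.normSq (F x) ∂P : ℝ) : ℂ) = 0 := by
      have hor : ∫ x, ((Complex.normSq (F x) : ℝ) : ℂ) ∂P
          = ((∫ x, Complex.normSq (F x) ∂P : ℝ) : ℂ) := integral_ofReal
      rw [← hor, ← hI0]
      refine integral_congr_ae (Filter.Eventually.of_forall fun x => ?_)
      simp [Complex.mul_conj]
    have hre0 : ∫ x, Complex.normSq (F x) ∂P = 0 := by exact_mod_cast hre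
    have hintN : Integrable (fun x => Complex.normSq (F x)) P := by
      have hm : Measurable fun x => Complex.normSq (F x) :=
        Complex.continuous_normSq.measurable.comp hFmeas
      refine ⟨hm.aestronglyMeasurable, ?_⟩
      refine HasFiniteIntegral.of_bounded (C := (2 * ‖f‖) ^ 2) ?_
      filter_upwards with x
      have hb2 : ‖F x‖ ≤ 2 * ‖f‖ := by
        calc ‖F x‖ ≤ ‖f (x a)‖ + ‖f (x b)‖ := norm_sub_le _ _
          _ ≤ ‖f‖ + ‖f‖ := add_le_add (f.norm_coe_le_norm _) (f.norm_coe_le_norm _)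
          _ = 2 * ‖f‖ := by ring
      rw [Real.norm_eq_abs, abs_of_nonneg (Complex.normSq_nonneg _), ← Complex.sq_norm]
      refine pow_le_pow_left₀ (norm_nonneg _) ?_ 2
      exact hb2
    have := (integral_eq_zero_iff_of_nonneg
      (fun x => Complex.normSq_nonneg (F x)) hintN).mp hre0
    filter_upwards [this] with x hx
    have : Complex.normSq (F x) = 0 := hx
    have : F x = 0 := by exact_mod_cast Complex.normSq_eq_zero.mp this
    exact sub_eq_zero.mp this
  letI : TopologicalSpace.MetrizableSpace E := inferInstance
  letI : MetricSpace E := TopologicalSpace.metrizableSpaceMetric E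
  obtain ⟨D, hDc, hDd⟩ := TopologicalSpace.exists_countable_dense E
  have hD : ∀ᵐ x ∂P, ∀ y ∈ D, dist (x a) y = dist (x b) y := by
    rw [ae_ball_iff hDc]
    intro y _
    have hfy : Continuous fun z : E => ((dist z y : ℝ) : ℂ) :=
      Complex.continuous_ofReal.comp (continuous_id.dist continuous_const)
    filter_upwards [key ⟨fun z => ((dist z y : ℝ) : ℂ), hfy⟩] with x hx
    simp only [ContinuousMap.coe_mk] at hx
    exact_mod_cast hx
  filter_upwards [hD] with x hx
  by_contra hne
  have hd : 0 < dist (x a) (x b) := dist_pos.mpr hne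
  obtain ⟨y, hy1, hy2⟩ :=
    Metric.dense_iff.mp hDd (x a) (dist (x a) (x b) / 2) (by linarith)
  have h1 : dist (x a) y = dist (x b) y := hx y hy2
  have h2 : dist y (x a) < dist (x a) (x b) / 2 := Metric.mem_ball.mp hy1
  have h3 : dist (x a) (x b) ≤ dist (x a) y + dist y (x b) := dist_triangle _ _ _
  rw [dist_comm y (x a)] at h2
  rw [dist_comm y (x b)] at h3
  linarith [h1 ▸ h3]
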